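/- If m and n are both odd integers with m, n ≥ 3, then G(m,n) equals the alternating group on Fin m × Fin n, i.e., G(m,n) consists exactly of the even permutations of Fin m × Fin n. -/

import Mathlib

set_option maxHeartbeats 1600000

open Fin.NatCast Fin.CommRing

section ThreeCycleAux

open Equiv Equiv.Perm

variable {α : Type*} [DecidableEq α] [Fintype α]

/-- The 3-cycle `x → y → z → x` as a product of two swaps. -/
def t3 (x y z : α) : Perm α := Equiv.swap x y * Equiv.swap y z

lemma t3_rot {x y z : α} (hxy : x ≠ y) (hyz : y ≠ z) (hxz : x ≠ z) :
    t3 x y z = t3 y z x := by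
  ext w
  simp only [t3, mul_apply, swap_apply_def]
  split_ifs <;> simp_all

lemma t3_inv {x y z : α} (hxy : x ≠ y) (hyz : y ≠ z) (hxz : x ≠ z) :
    (t3 x y z)⁻¹ = t3 x z y := by
  rw [t3, t3, mul_inv_rev, swap_inv, swap_inv]
  ext w
  simp only [mul_apply, swap_apply_def]
  split_ifs <;> simp_all

lemma t3_conj (g : Perm α) (x y z : α) :
    g * t3 x y z * g⁻¹ = t3 (g x) (g y) (g z) := by
  rw [t3, t3, swap_apply_apply, swap_apply_apply]
  group

lemma t3_F3 {a b u v : α} (hab : a ≠ b) (hau : a ≠ u) (hav : a ≠ v)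
    (hbu : b ≠ u) (hbv : b ≠ v) (huv : u ≠ v) :
    t3 a u v = t3 a b v * (t3 a b u)⁻¹ := by
  rw [t3_inv hab hbu hau]
  ext w
  simp only [t3, mul_apply, swap_apply_def]
  split_ifs <;> simp_all

lemma t3_F5 {a x y z : α} (hax : a ≠ x) (hay : a ≠ y) (haz : a ≠ z)
    (hxy : x ≠ y) (hyz : y ≠ z) (hxz : x ≠ z) :
    t3 x y z = t3 a x y * t3 a y z := by
  ext w
  simp only [t3, mul_apply, swap_apply_def]
  split_ifs <;> simp_all

lemma isThreeCycle_exists_t3 {σ : Perm α} (h : σ.IsThreeCycle) :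
    ∃ x y z : α, x ≠ y ∧ y ≠ z ∧ x ≠ z ∧ σ = t3 x y z := by
  obtain ⟨x, hx, -⟩ := h.isCycle
  have h3 : σ ^ 3 = 1 := by
    rw [← h.orderOf]; exact pow_orderOf_eq_one σ
  have hzx : σ (σ (σ x)) = x := by
    simpa [pow_succ, mul_apply] using congrArg (fun f : Perm α => f x) h3
  have hxy : x ≠ σ x := fun e => hx e.symm
  have hyz : σ x ≠ σ (σ x) := fun e => hx (σ.injective e).symm
  have hxz : x ≠ σ (σ x) := by
    intro e
    apply hx
    conv_lhs => rw [e]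
    exact hzx
  refine ⟨x, σ x, σ (σ x), hxy, hyz, hxz, ?_⟩
  have hsupp : σ.support = {x, σ x, σ (σ x)} := by
    have hsub : ({x, σ x, σ (σ x)} : Finset α) ⊆ σ.support := by
      intro w hw
      simp only [Finset.mem_insert, Finset.mem_singleton] at hw
      rcases hw with rfl | rfl | rfl
      · simpa [mem_support] using Ne.symm hxy
      · simpa [mem_support] using Ne.symm hyz
      · simp only [mem_support, hzx]
        exact fun e => hxz e
    have hcard : ({x, σ x, σ (σ x)} : Finset α).card = 3 := by
      rw [Finset.card_insert_of_notMem (by simp [hxy, hxz]),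
        Finset.card_insert_of_notMem (by simp [hyz]), Finset.card_singleton]
    exact (Finset.eq_of_subset_of_card_le hsub (by rw [h.card_support, hcard])).symm
  ext w
  simp only [t3, mul_apply]
  by_cases hwx : w = x
  · subst hwx
    rw [swap_apply_of_ne_of_ne hxy hxz, swap_apply_left]
  by_cases hwy : w = σ x
  · subst hwy
    rw [swap_apply_left, swap_apply_of_ne_of_ne (Ne.symm hxz) (Ne.symm hyz)]
  by_cases hwz : w = σ (σ x)
  · subst hwz
    rw [swap_apply_right, swap_apply_right, hzx]
  · have hw : w ∉ σ.support := by simp [hsupp, hwx, hwy, hwz]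
    rw [notMem_support.mp hw, swap_apply_of_ne_of_ne hwy hwz,
      swap_apply_of_ne_of_ne hwx hwy]

lemma alternating_le_of_t3 {H : Subgroup (Perm α)} (a b : α) (hab : a ≠ b)
    (hc : ∀ x, x ≠ a → x ≠ b → t3 a b x ∈ H) : alternatingGroup α ≤ H := by
  have hL : ∀ u v : α, u ≠ a → v ≠ a → u ≠ v → t3 a u v ∈ H := by
    intro u v hua hva huv
    by_cases hub : u = b
    · rw [hub]
      exact hc v hva (fun e => huv (hub.trans e.symm))
    by_cases hvb : v = b
    · have key : t3 a u v = (t3 a b u)⁻¹ := by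
        rw [t3_inv hab (Ne.symm hub) (Ne.symm hua), hvb]
      rw [key]
      exact inv_mem (hc u hua hub)
    · rw [t3_F3 hab (Ne.symm hua) (Ne.symm hva) (Ne.symm hub) (Ne.symm hvb) huv]
      exact mul_mem (hc v hva hvb) (inv_mem (hc u hua hub))
  have main : ∀ x y z : α, x ≠ y → y ≠ z → x ≠ z → t3 x y z ∈ H := by
    intro x y z hxy hyz hxz
    by_cases hxa : x = a
    · rw [hxa]
      exact hL y z (fun e => hxy (hxa.trans e.symm)) (fun e => hxz (hxa.trans e.symm)) hyz
    by_cases hya : y = a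
    · rw [t3_rot hxy hyz hxz, hya]
      exact hL z x (fun e => hyz (hya.trans e.symm)) hxa (Ne.symm hxz)
    by_cases hza : z = a
    · rw [t3_rot hxy hyz hxz, t3_rot hyz (Ne.symm hxz) (Ne.symm hxy), hza]
      exact hL x y hxa hya hxy
    · rw [t3_F5 (Ne.symm hxa) (Ne.symm hya) (Ne.symm hza) hxy hyz hxz]
      exact mul_mem (hL x y hxa hya hxy) (hL y z hya hza hyz)
  rw [← closure_three_cycles_eq_alternating]
  refine (Subgroup.closure_le H).mpr ?_
  intro σ hσ
  obtain ⟨x, y, z, hxy, hyz, hxz, rfl⟩ := isThreeCycle_exists_t3 hσ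
  exact main x y z hxy hyz hxz

end ThreeCycleAux



/-- Unit rightward rotation of row `i` of the `m × n` Torus Puzzle. -/
def rowRot (m n : ℕ) (i : Fin m) : Equiv.Perm (Fin m × Fin n) where
  toFun p := if p.1 = i then (i, finRotate n p.2) else p
  invFun p := if p.1 = i then (i, (finRotate n).symm p.2) else p
  left_inv := by rintro ⟨a, b⟩; by_cases h : a = i <;> simp [h, -finRotate_apply, -finRotate_symm_apply]
  right_inv := by rintro ⟨a, b⟩; by_cases h : a = i <;> simp [h, -finRotate_apply, -finRotate_symm_apply]

/-- Unit downward rotation of column `j` of the `m × n` Torus Puzzle. -/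
def colRot (m n : ℕ) (j : Fin n) : Equiv.Perm (Fin m × Fin n) where
  toFun p := if p.2 = j then (finRotate m p.1, j) else p
  invFun p := if p.2 = j then ((finRotate m).symm p.1, j) else p
  left_inv := by rintro ⟨a, b⟩; by_cases h : b = j <;> simp [h, -finRotate_apply, -finRotate_symm_apply]
  right_inv := by rintro ⟨a, b⟩; by_cases h : b = j <;> simp [h, -finRotate_apply, -finRotate_symm_apply]

/-- The set `S(m,n)` of the `m + n` unit rotations. -/
def unitRotations (m n : ℕ) : Set (Equiv.Perm (Fin m × Fin n)) :=
  Set.range (rowRot m n) ∪ Set.range (colRot m n)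

/-- The group `G(m,n)` generated by the unit rotations. -/
def torusGroup (m n : ℕ) : Subgroup (Equiv.Perm (Fin m × Fin n)) :=
  Subgroup.closure (unitRotations m n)



section TorusAux

open Equiv Equiv.Perm

/-- Row `i` as a subtype, equivalent to `Fin n`. -/
def rowEmb (m n : ℕ) (i : Fin m) : Fin n ≃ {p : Fin m × Fin n // p.1 = i} where
  toFun j := ⟨(i, j), rfl⟩
  invFun p := p.1.2
  left_inv j := rfl
  right_inv := by rintro ⟨⟨a, b⟩, rfl⟩; rfl

/-- Column `j` as a subtype, equivalent to `Fin m`. -/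
def colEmb (m n : ℕ) (j : Fin n) : Fin m ≃ {p : Fin m × Fin n // p.2 = j} where
  toFun i := ⟨(i, j), rfl⟩
  invFun p := p.1.1
  left_inv i := rfl
  right_inv := by rintro ⟨⟨a, b⟩, rfl⟩; rfl

lemma rowRot_apply' (m n : ℕ) (i a : Fin m) (b : Fin n) :
    rowRot m n i (a, b) = if a = i then (i, finRotate n b) else (a, b) := rfl

lemma colRot_apply' (m n : ℕ) (j b : Fin n) (a : Fin m) :
    colRot m n j (a, b) = if b = j then (finRotate m a, j) else (a, b) := rfl

lemma rowEmb_apply (m n : ℕ) (i : Fin m) (b : Fin n) :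
    (rowEmb m n i b : Fin m × Fin n) = (i, b) := rfl

lemma colEmb_apply (m n : ℕ) (j : Fin n) (a : Fin m) :
    (colEmb m n j a : Fin m × Fin n) = (a, j) := rfl

lemma rowRot_eq_extendDomain (m n : ℕ) (i : Fin m) :
    rowRot m n i = (finRotate n).extendDomain (rowEmb m n i) := by
  refine Equiv.ext fun p => ?_
  obtain ⟨a, b⟩ := p
  by_cases h : a = i
  · subst h
    rw [@Perm.extendDomain_apply_subtype _ _ (finRotate n)
      (fun q : Fin m × Fin n => q.1 = a) _ (rowEmb m n a) (a, b) rfl]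
    rw [rowRot_apply', if_pos rfl]
    rfl
  · rw [@Perm.extendDomain_apply_not_subtype _ _ (finRotate n)
      (fun q : Fin m × Fin n => q.1 = i) _ (rowEmb m n i) (a, b) h]
    rw [rowRot_apply', if_neg h]

lemma colRot_eq_extendDomain (m n : ℕ) (j : Fin n) :
    colRot m n j = (finRotate m).extendDomain (colEmb m n j) := by
  refine Equiv.ext fun p => ?_
  obtain ⟨a, b⟩ := p
  by_cases h : b = j
  · subst h
    rw [@Perm.extendDomain_apply_subtype _ _ (finRotate m)
      (fun q : Fin m × Fin n => q.2 = b) _ (colEmb m n b) (a, b) rfl]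
    rw [colRot_apply', if_pos rfl]
    rfl
  · rw [@Perm.extendDomain_apply_not_subtype _ _ (finRotate m)
      (fun q : Fin m × Fin n => q.2 = j) _ (colEmb m n j) (a, b) h]
    rw [colRot_apply', if_neg h]

lemma sign_rowRot (m n : ℕ) (hn : Odd n) (i : Fin m) :
    Perm.sign (rowRot m n i) = 1 := by
  obtain ⟨k, rfl⟩ := hn
  rw [rowRot_eq_extendDomain, Perm.sign_extendDomain, sign_finRotate]
  exact (even_two_mul k).neg_one_pow

lemma sign_colRot (m n : ℕ) (hm : Odd m) (j : Fin n) :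
    Perm.sign (colRot m n j) = 1 := by
  obtain ⟨k, rfl⟩ := hm
  rw [colRot_eq_extendDomain, Perm.sign_extendDomain, sign_finRotate]
  exact (even_two_mul k).neg_one_pow

lemma rowRot_apply (m n : ℕ) (i : Fin m) (p : Fin m × Fin (n+1)) :
    rowRot m (n+1) i p = if p.1 = i then (i, p.2 + 1) else p := by
  obtain ⟨a, b⟩ := p
  rw [rowRot_apply']
  simp only [finRotate_succ_apply]

lemma colRot_apply (m n : ℕ) (j : Fin n) (p : Fin (m+1) × Fin n) :
    colRot (m+1) n j p = if p.2 = j then (p.1 + 1, j) else p := by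
  obtain ⟨a, b⟩ := p
  rw [colRot_apply']
  simp only [finRotate_succ_apply]

lemma rowRot_pow (m n : ℕ) (i : Fin m) (k : ℕ) (a : Fin m) (b : Fin (n+1)) :
    ((rowRot m (n+1) i) ^ k) (a, b) = if a = i then (i, b + (k : Fin (n+1))) else (a, b) := by
  induction k generalizing a b with
  | zero =>
    simp only [pow_zero, Perm.coe_one, id_eq, Nat.cast_zero, add_zero]
    split_ifs with h
    · rw [h]
    · rfl
  | succ k ih =>
    rw [pow_succ, Perm.mul_apply, rowRot_apply']
    by_cases h : a = i
    · rw [if_pos h, ih, if_pos rfl, if_pos h, finRotate_succ_apply]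
      simp only [Prod.mk.injEq, true_and]
      push_cast
      ring
    · rw [if_neg h, ih, if_neg h, if_neg h]

lemma colRot_pow (m n : ℕ) (j : Fin n) (k : ℕ) (a : Fin (m+1)) (b : Fin n) :
    ((colRot (m+1) n j) ^ k) (a, b) = if b = j then (a + (k : Fin (m+1)), j) else (a, b) := by
  induction k generalizing a b with
  | zero =>
    simp only [pow_zero, Perm.coe_one, id_eq, Nat.cast_zero, add_zero]
    split_ifs with h
    · rw [h]
    · rfl
  | succ k ih =>
    rw [pow_succ, Perm.mul_apply, colRot_apply']
    by_cases h : b = j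
    · rw [if_pos h, ih, if_pos rfl, if_pos h, finRotate_succ_apply]
      simp only [Prod.mk.injEq, and_true]
      push_cast
      ring
    · rw [if_neg h, ih, if_neg h, if_neg h]

lemma key_comm (m n : ℕ) :
    rowRot (m+2) (n+2) 0 * colRot (m+2) (n+2) 0
      = t3 ((0,0) : Fin (m+2) × Fin (n+2)) (0,1) (1,0)
        * (colRot (m+2) (n+2) 0 * rowRot (m+2) (n+2) 0) := by
  have h10m : (1 : Fin (m+2)) ≠ 0 := by simp [Fin.ext_iff]
  have h10n : (1 : Fin (n+2)) ≠ 0 := by simp [Fin.ext_iff]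
  refine Equiv.ext fun p => ?_
  obtain ⟨a, b⟩ := p
  simp only [Perm.mul_apply, t3]
  by_cases hb : b = 0
  · subst hb
    by_cases ha : a = 0
    · subst ha
      simp [-Prod.mk_zero_zero, rowRot_apply', colRot_apply', finRotate_succ_apply, Equiv.swap_apply_def,
        Prod.mk.injEq, h10m, h10n]
    · by_cases hA : a + 1 = 0
      · simp [-Prod.mk_zero_zero, rowRot_apply', colRot_apply', finRotate_succ_apply, Equiv.swap_apply_def,
          Prod.mk.injEq, h10m, h10n, ha, hA]
      · have hA1 : a + 1 ≠ 1 := fun h =>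
          ha (add_right_cancel (h.trans (zero_add (1 : Fin (m+2))).symm))
        simp [-Prod.mk_zero_zero, rowRot_apply', colRot_apply', finRotate_succ_apply, Equiv.swap_apply_def,
          Prod.mk.injEq, h10m, h10n, ha, hA, hA1]
  · by_cases ha : a = 0
    · subst ha
      by_cases hB : b + 1 = 0
      · simp [-Prod.mk_zero_zero, rowRot_apply', colRot_apply', finRotate_succ_apply, Equiv.swap_apply_def,
          Prod.mk.injEq, h10m, h10n, hb, hB]
      · have hB1 : b + 1 ≠ 1 := fun h =>
          hb (add_right_cancel (h.trans (zero_add (1 : Fin (n+2))).symm))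
        simp [-Prod.mk_zero_zero, rowRot_apply', colRot_apply', finRotate_succ_apply, Equiv.swap_apply_def,
          Prod.mk.injEq, h10m, h10n, hb, hB, hB1]
    · simp [-Prod.mk_zero_zero, rowRot_apply', colRot_apply', finRotate_succ_apply, Equiv.swap_apply_def,
        Prod.mk.injEq, h10m, h10n, hb, ha]

end TorusAux

/-- When both  and  are odd, `G(m,n)` is the alternating group. -/
theorem torusGroup_eq_alternatingGroup_of_odd_odd (m n : ℕ)
    (hm : 3 ≤ m) (hn : 3 ≤ n) (hmo : Odd m) (hno : Odd n) :
    torusGroup m n = alternatingGroup (Fin m × Fin n) := by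
  obtain ⟨m', rfl⟩ : ∃ k, m = k + 2 := ⟨m - 2, by omega⟩
  obtain ⟨n', rfl⟩ : ∃ k, n = k + 2 := ⟨n - 2, by omega⟩
  have h01M : (0 : Fin (m'+2)) ≠ 1 := by simp [Fin.ext_iff]
  have h01N : (0 : Fin (n'+2)) ≠ 1 := by simp [Fin.ext_iff]
  have h2N : ((1 : Fin (n'+2)) + 1).val = 2 := by
    rw [Fin.val_add, Fin.val_one, Nat.mod_eq_of_lt (by omega)]
  have h0_2 : (0 : Fin (n'+2)) ≠ 1 + 1 := by simp [Fin.ext_iff, h2N]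
  have h1_2 : (1 : Fin (n'+2)) ≠ 1 + 1 := by simp [Fin.ext_iff, h2N]
  have hρ : ∀ i, rowRot (m'+2) (n'+2) i ∈ torusGroup (m'+2) (n'+2) :=
    fun i => Subgroup.subset_closure (Or.inl ⟨i, rfl⟩)
  have hγ : ∀ j, colRot (m'+2) (n'+2) j ∈ torusGroup (m'+2) (n'+2) :=
    fun j => Subgroup.subset_closure (Or.inr ⟨j, rfl⟩)
  have hcG : t3 ((0,0) : Fin (m'+2) × Fin (n'+2)) (0,1) (1,0) ∈ torusGroup (m'+2) (n'+2) := by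
    have hkey := key_comm m' n'
    have heq : t3 ((0,0) : Fin (m'+2) × Fin (n'+2)) (0,1) (1,0)
        = (rowRot (m'+2) (n'+2) 0 * colRot (m'+2) (n'+2) 0)
          * (colRot (m'+2) (n'+2) 0 * rowRot (m'+2) (n'+2) 0)⁻¹ := by
      rw [hkey]; group
    rw [heq]
    exact mul_mem (mul_mem (hρ 0) (hγ 0)) (inv_mem (mul_mem (hγ 0) (hρ 0)))
  apply le_antisymm
  · rw [torusGroup, Subgroup.closure_le]
    rintro σ (⟨i, rfl⟩ | ⟨j, rfl⟩)
    · exact Equiv.Perm.mem_alternatingGroup.mpr (sign_rowRot _ _ hno i)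
    · exact Equiv.Perm.mem_alternatingGroup.mpr (sign_colRot _ _ hmo j)
  · apply alternating_le_of_t3 ((0,0) : Fin (m'+2) × Fin (n'+2)) (0,1)
      (by simp [Prod.ext_iff, Fin.ext_iff])
    intro x hxa hxb
    obtain ⟨u, v⟩ := x
    by_cases hu : u = 0
    · subst hu
      have hv0 : v ≠ 0 := fun e => hxa (by rw [e])
      have hv1 : v ≠ 1 := fun e => hxb (by rw [e])
      set g := (colRot (m'+2) (n'+2) v) ^ (((0 : Fin (m'+2)) - 1).val)
          * (rowRot (m'+2) (n'+2) 1) ^ (v.val) with hg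
      have hgG : g ∈ torusGroup (m'+2) (n'+2) :=
        mul_mem (pow_mem (hγ v) _) (pow_mem (hρ 1) _)
      have e1 : g (0, 0) = ((0, 0) : Fin (m'+2) × Fin (n'+2)) := by
        rw [hg]
        simp only [Equiv.Perm.mul_apply]
        rw [rowRot_pow, if_neg h01M, colRot_pow, if_neg (fun e => hv0 e.symm)]
      have e2 : g (0, 1) = ((0, 1) : Fin (m'+2) × Fin (n'+2)) := by
        rw [hg]
        simp only [Equiv.Perm.mul_apply]
        rw [rowRot_pow, if_neg h01M, colRot_pow, if_neg (fun e => hv1 e.symm)]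
      have e3 : g (1, 0) = ((0, v) : Fin (m'+2) × Fin (n'+2)) := by
        rw [hg]
        simp only [Equiv.Perm.mul_apply]
        rw [rowRot_pow, if_pos rfl, Fin.cast_val_eq_self, zero_add, colRot_pow,
          if_pos rfl, Fin.cast_val_eq_self,
          show (1 : Fin (m'+2)) + ((0 : Fin (m'+2)) - 1) = 0 from by ring]
      have hmem := mul_mem (mul_mem hgG hcG) (inv_mem hgG)
      rwa [t3_conj, e1, e2, e3] at hmem
    · have hu' : ¬((0 : Fin (m'+2)) = u) := fun e => hu e.symm
      set g := (rowRot (m'+2) (n'+2) u) ^ ((v - (1 + 1)).val)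
          * ((colRot (m'+2) (n'+2) (1 + 1)) ^ ((u - 1).val)
          * (rowRot (m'+2) (n'+2) 1) ^ (((1 : Fin (n'+2)) + 1).val)) with hg
      have hgG : g ∈ torusGroup (m'+2) (n'+2) :=
        mul_mem (pow_mem (hρ u) _) (mul_mem (pow_mem (hγ (1+1)) _) (pow_mem (hρ 1) _))
      have e1 : g (0, 0) = ((0, 0) : Fin (m'+2) × Fin (n'+2)) := by
        rw [hg]
        simp only [Equiv.Perm.mul_apply]
        rw [rowRot_pow _ _ 1, if_neg h01M, colRot_pow, if_neg h0_2,
          rowRot_pow _ _ u, if_neg hu']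
      have e2 : g (0, 1) = ((0, 1) : Fin (m'+2) × Fin (n'+2)) := by
        rw [hg]
        simp only [Equiv.Perm.mul_apply]
        rw [rowRot_pow _ _ 1, if_neg h01M, colRot_pow, if_neg h1_2,
          rowRot_pow _ _ u, if_neg hu']
      have e3 : g (1, 0) = ((u, v) : Fin (m'+2) × Fin (n'+2)) := by
        rw [hg]
        simp only [Equiv.Perm.mul_apply]
        rw [rowRot_pow _ _ 1, if_pos rfl, Fin.cast_val_eq_self ((1 : Fin (n'+2)) + 1),
          zero_add, colRot_pow, if_pos rfl, Fin.cast_val_eq_self (u - 1),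
          show (1 : Fin (m'+2)) + (u - 1) = u from by ring, rowRot_pow _ _ u, if_pos rfl,
          Fin.cast_val_eq_self (v - (1 + 1)),
          show (1 : Fin (n'+2)) + 1 + (v - (1 + 1)) = v from by ring]
      have hmem := mul_mem (mul_mem hgG hcG) (inv_mem hgG)
      rwa [t3_conj, e1, e2, e3] at hmem
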